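/- Let n ≥ 1 and let M̂ ⊆ S^{n+1} be a weakly convex body in the closed hemisphere ℋ(x₀) for some x₀ ∈ S^{n+1}. Let p ∈ M̂ ∩ 𝒮(x₀) and suppose that M̂ satisfies an interior sphere condition at p with respect to x₀. Let v be a unit vector with ⟪v,p⟫ = 0, let t₀ > 0, and set γ(t) := (cos t)p + (sin t)v; assume γ(t) ∈ int ℋ(x₀) for all t ∈ (0,t₀). Then there exists δ with 0 < δ ≤ t₀ such that γ(t) ∈ interior(M̂) for all t ∈ (0,δ). -/

import Mathlib

open scoped RealInnerProductSpace

noncomputable section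

/-- Euclidean space `ℝ^{n+2}`. -/
abbrev Eucl (n : ℕ) : Type := EuclideanSpace ℝ (Fin (n + 2))

/-- The unit sphere `S^{n+1} ⊆ ℝ^{n+2}`, as a subtype with the subspace topology. -/
abbrev Sphere (n : ℕ) : Type := Metric.sphere (0 : Eucl n) 1

/-- The closed hemisphere centered at `x`. -/
def hemi {n : ℕ} (x : Sphere n) : Set (Sphere n) :=
  {p : Sphere n | 0 ≤ ⟪(p : Eucl n), (x : Eucl n)⟫}

/-- The open hemisphere centered at `x` (the interior of `hemi x`). -/
def openHemi {n : ℕ} (x : Sphere n) : Set (Sphere n) :=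
  {p : Sphere n | 0 < ⟪(p : Eucl n), (x : Eucl n)⟫}

/-- The equator `𝒮(x)`. -/
def equator {n : ℕ} (x : Sphere n) : Set (Sphere n) :=
  {p : Sphere n | ⟪(p : Eucl n), (x : Eucl n)⟫ = 0}

/-- `Γ` is a minimizing geodesic segment from `p` to `q` in the sphere. -/
def IsMinGeodesicSegment {n : ℕ} (p q : Sphere n) (Γ : Set (Sphere n)) : Prop :=
  ∃ v : Eucl n, ‖v‖ = 1 ∧ ⟪v, (p : Eucl n)⟫ = 0 ∧
    Real.cos (Real.arccos ⟪(p : Eucl n), (q : Eucl n)⟫) • (p : Eucl n) +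
      Real.sin (Real.arccos ⟪(p : Eucl n), (q : Eucl n)⟫) • v = (q : Eucl n) ∧
    Γ = {z : Sphere n | ∃ t ∈ Set.Icc (0 : ℝ) (Real.arccos ⟪(p : Eucl n), (q : Eucl n)⟫),
      (z : Eucl n) = Real.cos t • (p : Eucl n) + Real.sin t • v}

/-- A set is weakly convex if any two of its points are joined by some
minimizing geodesic segment contained in the set. -/
def WeaklyConvexSet {n : ℕ} (M : Set (Sphere n)) : Prop :=
  ∀ p ∈ M, ∀ q ∈ M, ∃ Γ : Set (Sphere n), IsMinGeodesicSegment p q Γ ∧ Γ ⊆ M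

/-- A set is convex if every minimizing geodesic segment joining two of its points
is contained in the set. -/
def SphConvexSet {n : ℕ} (M : Set (Sphere n)) : Prop :=
  ∀ p ∈ M, ∀ q ∈ M, ∀ Γ : Set (Sphere n), IsMinGeodesicSegment p q Γ → Γ ⊆ M

/-- Stereographic projection sending `x₀` to `0 ∈ x₀^⊥`. -/
def stereo {n : ℕ} (x₀ : Sphere n) (p : Sphere n) : Eucl n :=
  (2 / (1 + ⟪(p : Eucl n), (x₀ : Eucl n)⟫)) •
    ((p : Eucl n) - ⟪(p : Eucl n), (x₀ : Eucl n)⟫ • (x₀ : Eucl n))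

/-- `A` satisfies an interior sphere condition at `p` with respect to `x₀`:
there is a ball (of the hyperplane `x₀^⊥`) inside `stereo x₀ '' A` touching `stereo x₀ p`. -/
def IntSphereCond {n : ℕ} (x₀ : Sphere n) (A : Set (Sphere n)) (p : Sphere n) : Prop :=
  ∃ c : Eucl n, ⟪c, (x₀ : Eucl n)⟫ = 0 ∧ ∃ ρ : ℝ, 0 < ρ ∧
    {y : Eucl n | ⟪y, (x₀ : Eucl n)⟫ = 0 ∧ dist y c < ρ} ⊆ stereo x₀ '' A ∧
    ‖stereo x₀ p - c‖ = ρ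

lemma sphere_norm' {n : ℕ} (z : Sphere n) : ‖(z : Eucl n)‖ = 1 := by
  simpa using z.2

lemma sphere_inner_self' {n : ℕ} (z : Sphere n) : ⟪(z : Eucl n), (z : Eucl n)⟫ = 1 := by
  rw [real_inner_self_eq_norm_sq, sphere_norm']; norm_num

lemma stereo_norm_sq' {n : ℕ} (x₀ z : Sphere n)
    (h : 1 + ⟪(z : Eucl n), (x₀ : Eucl n)⟫ ≠ 0) :
    ⟪stereo x₀ z, stereo x₀ z⟫ * (1 + ⟪(z : Eucl n), (x₀ : Eucl n)⟫)^2
      = 4 * (1 - ⟪(z : Eucl n), (x₀ : Eucl n)⟫^2) := by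
  have hzz := sphere_inner_self' z
  have hxx := sphere_inner_self' x₀
  have hxz : ⟪(x₀ : Eucl n), (z : Eucl n)⟫ = ⟪(z : Eucl n), (x₀ : Eucl n)⟫ :=
    real_inner_comm _ _
  unfold stereo
  simp only [inner_sub_left, inner_sub_right, real_inner_smul_left, real_inner_smul_right,
    hzz, hxx, hxz]
  set cz := ⟪(z : Eucl n), (x₀ : Eucl n)⟫ with hcz
  field_simp
  ring

lemma stereo_inner_x₀ {n : ℕ} (x₀ z : Sphere n) :
    ⟪stereo x₀ z, (x₀ : Eucl n)⟫ = 0 := by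
  have hxx := sphere_inner_self' x₀
  unfold stereo
  rw [real_inner_smul_left, inner_sub_left, real_inner_smul_left, hxx, mul_one, sub_self,
    mul_zero]


private lemma key_ineq' (a ρ s C : ℝ) (hu : 0 < 1 + s * a)
    (hmain : (2 - ρ) * (1 - C) < a * s * ρ) (hsc : s^2 + C^2 = 1) :
    (2 * C - (2 - ρ) * (1 + s * a))^2 + 4 * s^2 * (1 - a^2) < ρ^2 * (1 + s * a)^2 := by
  have hid : (2 * C - (2 - ρ) * (1 + s * a))^2 + 4 * s^2 * (1 - a^2) - ρ^2 * (1 + s * a)^2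
      = 4 * (1 + s * a) * ((2 - ρ) * (1 - C) - a * s * ρ) + 4 * (C^2 + s^2 - 1) := by ring
  have hP : 0 < (1 + s * a) * (a * s * ρ - (2 - ρ) * (1 - C)) :=
    mul_pos hu (by linarith)
  nlinarith [hid, hP, hsc]

private lemma norm_lt_of' (N ρ u E : ℝ) (hN : 0 ≤ N) (hρ : 0 < ρ) (hu : 0 < u)
    (h1 : N^2 * u^2 = E) (h2 : E < ρ^2 * u^2) : N < ρ := by
  by_contra h
  push_neg at h
  have h3 : ρ^2 ≤ N^2 := by nlinarith
  have h4 : ρ^2 * u^2 ≤ N^2 * u^2 := by nlinarith [mul_pos hu hu]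
  linarith

set_option maxHeartbeats 1000000 in
theorem geodesic_enters_interior_aux (n : ℕ) (x₀ : Sphere n)
    (M : Set (Sphere n)) (hcpt : IsCompact M)
    (hsub : M ⊆ {q : Sphere n | 0 ≤ ⟪(q : Eucl n), (x₀ : Eucl n)⟫})
    (p : Sphere n) (hpM : p ∈ M) (hpx : ⟪(p : Eucl n), (x₀ : Eucl n)⟫ = 0)
    (c : Eucl n) (hcx : ⟪c, (x₀ : Eucl n)⟫ = 0) (ρ : ℝ) (hρ : 0 < ρ)
    (hball : {y : Eucl n | ⟪y, (x₀ : Eucl n)⟫ = 0 ∧ dist y c < ρ} ⊆ stereo x₀ '' closure M)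
    (htouch : ‖stereo x₀ p - c‖ = ρ)
    (v : Eucl n) (hv : ‖v‖ = 1) (hvp : ⟪v, (p : Eucl n)⟫ = 0)
    (t₀ : ℝ) (ht₀ : 0 < t₀) (γ : ℝ → Eucl n)
    (hγ : ∀ t : ℝ, γ t = Real.cos t • (p : Eucl n) + Real.sin t • v)
    (hγint : ∀ t ∈ Set.Ioo (0 : ℝ) t₀, 0 < ⟪γ t, (x₀ : Eucl n)⟫) :
    ∃ δ : ℝ, 0 < δ ∧ δ ≤ t₀ ∧
      ∀ t ∈ Set.Ioo (0 : ℝ) δ, γ t ∈ (fun z : Sphere n => (z : Eucl n)) '' interior M := by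
  classical
  rw [hcpt.isClosed.closure_eq] at hball
  have hpn := sphere_norm' p
  have hxn := sphere_norm' x₀
  have hpp := sphere_inner_self' p
  have hxx := sphere_inner_self' x₀
  have hvv : ⟪v, v⟫ = 1 := by rw [real_inner_self_eq_norm_sq, hv]; norm_num
  have hpv : ⟪(p : Eucl n), v⟫ = 0 := by rw [real_inner_comm]; exact hvp
  have hxp : ⟪(x₀ : Eucl n), (p : Eucl n)⟫ = 0 := by rw [real_inner_comm]; exact hpx
  obtain ⟨a, haa⟩ : ∃ a : ℝ, ⟪v, (x₀ : Eucl n)⟫ = a := ⟨_, rfl⟩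
  have hxv : ⟪(x₀ : Eucl n), v⟫ = a := by rw [real_inner_comm]; exact haa
  -- inner product of γ t with x₀
  have hγx : ∀ t : ℝ, ⟪γ t, (x₀ : Eucl n)⟫ = Real.sin t * a := by
    intro t
    rw [hγ t]
    simp only [inner_add_left, real_inner_smul_left, hpx, haa, mul_zero, zero_add]
  -- a > 0
  have ha : 0 < a := by
    set t1 := min t₀ 1 / 2 with ht1def
    have ht1pos : 0 < t1 := by
      have : 0 < min t₀ 1 := lt_min ht₀ one_pos
      simpa [ht1def] using half_pos this
    have ht1lt : t1 < t₀ := by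
      have h1 : min t₀ 1 ≤ t₀ := min_le_left _ _
      have h2 : 0 < min t₀ 1 := lt_min ht₀ one_pos
      rw [ht1def]; linarith
    have ht1le : t1 ≤ 1 / 2 := by
      have : min t₀ 1 ≤ 1 := min_le_right _ _
      rw [ht1def]; linarith
    have hpos := hγint t1 ⟨ht1pos, ht1lt⟩
    rw [hγx t1] at hpos
    have hsin : 0 < Real.sin t1 :=
      Real.sin_pos_of_pos_of_lt_pi ht1pos (by nlinarith [Real.pi_gt_three])
    nlinarith [hpos, hsin]
  -- stereo of p
  have hsp : stereo x₀ p = (2 : ℝ) • (p : Eucl n) := by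
    unfold stereo; rw [hpx]; norm_num
  rw [hsp] at htouch
  -- Claim A: everything in the ball-slice has norm ≤ 2
  have hA : ∀ y : Eucl n, ⟪y, (x₀ : Eucl n)⟫ = 0 → dist y c < ρ → ‖y‖ ≤ 2 := by
    intro y hy1 hy2
    obtain ⟨m, hmM, hmy⟩ := hball ⟨hy1, hy2⟩
    have hm0 : 0 ≤ ⟪(m : Eucl n), (x₀ : Eucl n)⟫ := hsub hmM
    have hm1 : ⟪(m : Eucl n), (x₀ : Eucl n)⟫ ≤ 1 := by
      have h := real_inner_le_norm (m : Eucl n) (x₀ : Eucl n)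
      rw [sphere_norm', sphere_norm'] at h; linarith
    have hne : 1 + ⟪(m : Eucl n), (x₀ : Eucl n)⟫ ≠ 0 := by
      have : (0:ℝ) < 1 + ⟪(m : Eucl n), (x₀ : Eucl n)⟫ := by linarith
      exact this.ne'
    have h2 := stereo_norm_sq' x₀ m hne
    rw [hmy, real_inner_self_eq_norm_sq] at h2
    nlinarith [norm_nonneg y, hm0, hm1, mul_nonneg (norm_nonneg y) hm0]
  have hc2 : ‖c‖ ≤ 2 := hA c hcx (by simpa using hρ)
  have hq : ‖(2 : ℝ) • (p : Eucl n)‖ = 2 := by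
    rw [norm_smul, sphere_norm']; norm_num
  -- 2 ≤ ‖c‖ + ρ
  have h2le : 2 ≤ ‖c‖ + ρ := by
    calc 2 = ‖(2 : ℝ) • (p : Eucl n)‖ := hq.symm
      _ = ‖c + ((2 : ℝ) • (p : Eucl n) - c)‖ := by
          rw [show c + ((2 : ℝ) • (p : Eucl n) - c) = (2 : ℝ) • (p : Eucl n) from by abel]
      _ ≤ ‖c‖ + ‖(2 : ℝ) • (p : Eucl n) - c‖ := norm_add_le _ _
      _ = ‖c‖ + ρ := by rw [htouch]
  -- ‖c‖ + ρ ≤ 2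
  have hBle : ‖c‖ + ρ ≤ 2 := by
    by_contra hcon
    push_neg at hcon
    by_cases hc : c = 0
    · subst hc
      simp only [norm_zero, zero_add] at hcon
      have h := hA (((ρ + 2) / 2) • (p : Eucl n))
        (by rw [real_inner_smul_left, hpx, mul_zero])
        (by
          rw [dist_zero_right, norm_smul, sphere_norm', mul_one, Real.norm_eq_abs,
            abs_of_pos (by linarith)]
          linarith)
      rw [norm_smul, sphere_norm', mul_one, Real.norm_eq_abs,
        abs_of_pos (by linarith)] at h
      linarith
    · have hcpos : 0 < ‖c‖ := norm_pos_iff.mpr hc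
      have hρε : 0 < ρ - (‖c‖ + ρ - 2) / 2 := by linarith
      have hdivpos : 0 < (ρ - (‖c‖ + ρ - 2) / 2) / ‖c‖ := div_pos hρε hcpos
      have heq : c + ((ρ - (‖c‖ + ρ - 2) / 2) / ‖c‖) • c
          = (1 + (ρ - (‖c‖ + ρ - 2) / 2) / ‖c‖) • c := by
        rw [add_smul, one_smul]
      have h := hA (c + ((ρ - (‖c‖ + ρ - 2) / 2) / ‖c‖) • c)
        (by rw [inner_add_left, real_inner_smul_left, hcx, mul_zero, add_zero])
        (by
          rw [dist_eq_norm, show c + ((ρ - (‖c‖ + ρ - 2) / 2) / ‖c‖) • c - c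
                = ((ρ - (‖c‖ + ρ - 2) / 2) / ‖c‖) • c from by abel,
            norm_smul, Real.norm_eq_abs, abs_of_pos hdivpos,
            div_mul_cancel₀ _ hcpos.ne']
          linarith)
      rw [heq, norm_smul, Real.norm_eq_abs, abs_of_pos (by linarith)] at h
      rw [add_mul, one_mul, div_mul_cancel₀ _ hcpos.ne'] at h
      linarith
  have hceq : ‖c‖ = 2 - ρ := by linarith
  have hρ2 : ρ ≤ 2 := by
    have := norm_nonneg c; linarith
  -- c = (2 - ρ) • p
  have hsr : SameRay ℝ c ((2 : ℝ) • (p : Eucl n) - c) := by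
    rw [sameRay_iff_norm_add]
    rw [show c + ((2 : ℝ) • (p : Eucl n) - c) = (2 : ℝ) • (p : Eucl n) from by abel,
      hq, htouch, hceq]
    ring
  have h1 := hsr.norm_smul_eq
  rw [hceq, htouch] at h1
  have hc_eq : c = (2 - ρ) • (p : Eucl n) := by
    have h2 : (2 : ℝ) • c = (2 : ℝ) • ((2 - ρ) • (p : Eucl n)) := by
      rw [smul_smul]
      linear_combination (norm := module) (-1 : ℝ) • h1
    exact smul_right_injective (Eucl n) (two_ne_zero) h2
  -- the open set U
  have hinner : Continuous fun z : Sphere n => ⟪(z : Eucl n), (x₀ : Eucl n)⟫ :=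
    continuous_subtype_val.inner continuous_const
  have hVopen : IsOpen {z : Sphere n | 0 < ⟪(z : Eucl n), (x₀ : Eucl n)⟫} :=
    isOpen_lt continuous_const hinner
  have hcont : ContinuousOn (stereo x₀) {z : Sphere n | 0 < ⟪(z : Eucl n), (x₀ : Eucl n)⟫} := by
    show ContinuousOn (fun z : Sphere n => (2 / (1 + ⟪(z : Eucl n), (x₀ : Eucl n)⟫)) •
      ((z : Eucl n) - ⟪(z : Eucl n), (x₀ : Eucl n)⟫ • (x₀ : Eucl n))) _
    apply ContinuousOn.fun_smul
    · apply ContinuousOn.div continuousOn_const (continuous_const.add hinner).continuousOn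
      intro z hz
      have h0 : 0 < ⟪(z : Eucl n), (x₀ : Eucl n)⟫ := hz
      have : (0:ℝ) < 1 + ⟪(z : Eucl n), (x₀ : Eucl n)⟫ := by linarith
      exact this.ne'
    · exact (continuous_subtype_val.sub (hinner.smul continuous_const)).continuousOn
  have hUopen : IsOpen ({z : Sphere n | 0 < ⟪(z : Eucl n), (x₀ : Eucl n)⟫}
      ∩ stereo x₀ ⁻¹' Metric.ball c ρ) :=
    hcont.isOpen_inter_preimage hVopen Metric.isOpen_ball
  have hUM : {z : Sphere n | 0 < ⟪(z : Eucl n), (x₀ : Eucl n)⟫}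
      ∩ stereo x₀ ⁻¹' Metric.ball c ρ ⊆ M := by
    rintro z ⟨hz1, hz2⟩
    have hz1' : 0 < ⟪(z : Eucl n), (x₀ : Eucl n)⟫ := hz1
    have hz2' : dist (stereo x₀ z) c < ρ := Metric.mem_ball.mp hz2
    obtain ⟨m, hmM, hme⟩ := hball ⟨stereo_inner_x₀ x₀ z, hz2'⟩
    have hm0 : 0 ≤ ⟪(m : Eucl n), (x₀ : Eucl n)⟫ := hsub hmM
    have hnm' : (0:ℝ) < 1 + ⟪(m : Eucl n), (x₀ : Eucl n)⟫ := by linarith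
    have hnz' : (0:ℝ) < 1 + ⟪(z : Eucl n), (x₀ : Eucl n)⟫ := by linarith
    have hnm : 1 + ⟪(m : Eucl n), (x₀ : Eucl n)⟫ ≠ 0 := hnm'.ne'
    have hnz : 1 + ⟪(z : Eucl n), (x₀ : Eucl n)⟫ ≠ 0 := hnz'.ne'
    have e1 := stereo_norm_sq' x₀ m hnm
    have e2 := stereo_norm_sq' x₀ z hnz
    rw [hme] at e1
    have hpoly : ((1 + ⟪(m : Eucl n), (x₀ : Eucl n)⟫) * (1 + ⟪(z : Eucl n), (x₀ : Eucl n)⟫))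
        * (⟪(z : Eucl n), (x₀ : Eucl n)⟫ - ⟪(m : Eucl n), (x₀ : Eucl n)⟫) = 0 := by
      linear_combination (-(1 + ⟪(z : Eucl n), (x₀ : Eucl n)⟫)^2 * e1
        + (1 + ⟪(m : Eucl n), (x₀ : Eucl n)⟫)^2 * e2) / 8
    have hprodne : (1 + ⟪(m : Eucl n), (x₀ : Eucl n)⟫) * (1 + ⟪(z : Eucl n), (x₀ : Eucl n)⟫)
        ≠ 0 := mul_ne_zero hnm hnz
    have hcmz : ⟪(m : Eucl n), (x₀ : Eucl n)⟫ = ⟪(z : Eucl n), (x₀ : Eucl n)⟫ := by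
      have := (mul_eq_zero.mp hpoly).resolve_left hprodne
      linarith
    unfold stereo at hme
    rw [hcmz] at hme
    have hk0 : (2 / (1 + ⟪(z : Eucl n), (x₀ : Eucl n)⟫)) ≠ 0 :=
      div_ne_zero two_ne_zero hnz
    have hmz := smul_right_injective (Eucl n) hk0 hme
    have hmz2 : (m : Eucl n) = (z : Eucl n) := by
      have := sub_left_inj.mp hmz
      exact this
    have : m = z := Subtype.ext hmz2
    rwa [this] at hmM
  have hUint : {z : Sphere n | 0 < ⟪(z : Eucl n), (x₀ : Eucl n)⟫}
      ∩ stereo x₀ ⁻¹' Metric.ball c ρ ⊆ interior M :=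
    interior_maximal hUM hUopen
  -- choose δ
  refine ⟨min t₀ (min 1 (a * ρ / (3 - ρ))), ?_, min_le_left _ _, ?_⟩
  · have h3 : 0 < 3 - ρ := by linarith
    have : 0 < a * ρ / (3 - ρ) := by positivity
    exact lt_min ht₀ (lt_min one_pos this)
  intro t ht
  obtain ⟨ht0, htδ⟩ := ht
  have ht1 : t ≤ 1 := le_trans htδ.le (le_trans (min_le_right _ _) (min_le_left _ _))
  have htX : t ≤ a * ρ / (3 - ρ) :=
    le_trans htδ.le (le_trans (min_le_right _ _) (min_le_right _ _))
  have hs : 0 < Real.sin t :=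
    Real.sin_pos_of_pos_of_lt_pi ht0 (by nlinarith [Real.pi_gt_three])
  have hsgt : t / 2 < Real.sin t := by
    have h := Real.sin_gt_sub_cube ht0
    have h2 : 0 ≤ t * (1 - t) * (1 + t) :=
      mul_nonneg (mul_nonneg ht0.le (by linarith)) (by linarith)
    nlinarith [h, h2]
  have hcosle : 1 - Real.cos t ≤ t ^ 2 / 2 := by
    have := Real.one_sub_sq_div_two_le_cos (x := t)
    linarith
  have hβ0 : 0 ≤ 2 - ρ := by linarith
  have hmain : (2 - ρ) * (1 - Real.cos t) < a * Real.sin t * ρ := by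
    have h3 : 0 < 3 - ρ := by linarith
    have h4 : (2 - ρ) * t ≤ a * ρ := by
      have h5 : t * (3 - ρ) ≤ a * ρ := by
        rw [← le_div_iff₀ h3]; exact htX
      nlinarith [ht0.le]
    nlinarith [mul_le_mul_of_nonneg_left hcosle hβ0,
      mul_le_mul_of_nonneg_right h4 (le_of_lt ht0),
      mul_lt_mul_of_pos_left hsgt (mul_pos ha hρ)]
  have hu : 0 < 1 + Real.sin t * a := by nlinarith [mul_pos hs ha]
  -- the sphere point
  have hinγ : ⟪γ t, γ t⟫ = 1 := by
    rw [hγ t]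
    simp only [inner_add_left, inner_add_right, real_inner_smul_left, real_inner_smul_right,
      hpp, hvv, hpv, hvp]
    have := Real.sin_sq_add_cos_sq t
    nlinarith [this]
  have hnγ : ‖γ t‖ = 1 := by
    have h := real_inner_self_eq_norm_sq (γ t)
    rw [hinγ] at h
    have h2 : (‖γ t‖ - 1) * (‖γ t‖ + 1) = 0 := by linear_combination -h
    rcases mul_eq_zero.mp h2 with h3 | h3
    · linarith
    · nlinarith [norm_nonneg (γ t)]
  set zt : Sphere n := ⟨γ t, by simpa using hnγ⟩ with hzt
  have hztc : (zt : Eucl n) = γ t := rfl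
  have hztx : ⟪(zt : Eucl n), (x₀ : Eucl n)⟫ = Real.sin t * a := by
    rw [hztc]; exact hγx t
  have hztpos : 0 < ⟪(zt : Eucl n), (x₀ : Eucl n)⟫ := by
    rw [hztx]; exact mul_pos hs ha
  have hσ : stereo x₀ zt = (2 / (1 + Real.sin t * a)) •
      (γ t - (Real.sin t * a) • (x₀ : Eucl n)) := by
    unfold stereo
    rw [hztx, hztc]
  -- the key inequality
  have hexp : ⟪stereo x₀ zt - c, stereo x₀ zt - c⟫ * (1 + Real.sin t * a)^2
      = (2 * Real.cos t - (2 - ρ) * (1 + Real.sin t * a))^2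
        + 4 * (Real.sin t)^2 * (1 - a^2) := by
    rw [hσ, hc_eq, hγ t]
    simp only [inner_sub_left, inner_sub_right, inner_add_left, inner_add_right,
      real_inner_smul_left, real_inner_smul_right, hpp, hvv, hxx, hpx, hxp, hpv, hvp,
      haa, hxv]
    field_simp
    ring
  have hineq2 : (2 * Real.cos t - (2 - ρ) * (1 + Real.sin t * a))^2
      + 4 * (Real.sin t)^2 * (1 - a^2) < ρ^2 * (1 + Real.sin t * a)^2 :=
    key_ineq' a ρ (Real.sin t) (Real.cos t) hu hmain (Real.sin_sq_add_cos_sq t)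
  have hdlt : dist (stereo x₀ zt) c < ρ := by
    rw [dist_eq_norm]
    refine norm_lt_of' _ ρ (1 + Real.sin t * a) _ (norm_nonneg _) hρ hu ?_ hineq2
    rw [← real_inner_self_eq_norm_sq]
    exact hexp
  have hmemU1 : zt ∈ {z : Sphere n | 0 < ⟪(z : Eucl n), (x₀ : Eucl n)⟫} := hztpos
  have hmemU2 : zt ∈ stereo x₀ ⁻¹' Metric.ball c ρ := Set.mem_preimage.mpr (Metric.mem_ball.mpr hdlt)
  have hmemU : zt ∈ {z : Sphere n | 0 < ⟪(z : Eucl n), (x₀ : Eucl n)⟫}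
      ∩ stereo x₀ ⁻¹' Metric.ball c ρ := Set.mem_inter hmemU1 hmemU2
  have hmemI : zt ∈ interior M := hUint hmemU
  exact ⟨zt, hmemI, hztc⟩

/-- if a weakly convex body in a hemisphere satisfies an interior sphere
condition at `p ∈ M̂ ∩ 𝒮(x₀)` and `γ` is a geodesic starting at `p` entering the open
hemisphere, then `γ(t)` lies in the interior of `M̂` for all small `t > 0`. -/
theorem geodesic_enters_interior (n : ℕ) (hn : 1 ≤ n) (x₀ : Sphere n)
    (M : Set (Sphere n)) (hcpt : IsCompact M) (hint : (interior M).Nonempty)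
    (hwc : WeaklyConvexSet M) (hsub : M ⊆ hemi x₀)
    (p : Sphere n) (hp : p ∈ M ∩ equator x₀) (hisc : IntSphereCond x₀ (closure M) p)
    (v : Eucl n) (hv : ‖v‖ = 1) (hvp : ⟪v, (p : Eucl n)⟫ = 0)
    (t₀ : ℝ) (ht₀ : 0 < t₀) (γ : ℝ → Eucl n)
    (hγ : ∀ t : ℝ, γ t = Real.cos t • (p : Eucl n) + Real.sin t • v)
    (hγint : ∀ t ∈ Set.Ioo (0 : ℝ) t₀, 0 < ⟪γ t, (x₀ : Eucl n)⟫) :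
    ∃ δ : ℝ, 0 < δ ∧ δ ≤ t₀ ∧
      ∀ t ∈ Set.Ioo (0 : ℝ) δ, γ t ∈ (fun z : Sphere n => (z : Eucl n)) '' interior M := by
  obtain ⟨hpM, hpE⟩ := hp
  unfold IntSphereCond at hisc
  obtain ⟨c, hcx, ρ, hρ, hball, htouch⟩ := hisc
  exact geodesic_enters_interior_aux n x₀ M hcpt hsub p hpM hpE c hcx ρ hρ hball htouch
    v hv hvp t₀ ht₀ γ hγ hγint
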